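/- In ℚ^10, let v_1 = (1,0,0,0,1,1,0,0,1,0), v_2 = (1,1,0,0,0,0,1,0,0,1), v_3 = (0,1,1,0,0,1,0,1,0,0), v_4 = (0,0,1,1,0,0,1,0,1,0), v_5 = (0,0,0,1,1,0,0,1,0,1) (the fan vectors), and let F be their ℚ-linear span. Then: (i) F has dimension 5; (ii) v_1 + v_2 + v_3 + v_4 + v_5 = (2,2,2,2,2,2,2,2,2,2), so F contains the all-ones vector 𝟙 = (1,...,1); and (iii) F is invariant under the coordinate-permutation action of each of the permutations α = (1 5)(2 8)(4 7), σ = (2 5 7 6 10 9)(3 8 4), and φ = (1 2 3 4 5)(6 7 8 9 10), where a permutation g acts on (x_1,...,x_10) by sending it to (x_{g^{-1}(1)},...,x_{g^{-1}(10)}). -/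

import Mathlib

/-- The fan vectors `v_1, …, v_5` in `ℚ^10`. -/
def fanVec : Fin 5 → (Fin 10 → ℚ)
  | 0 => ![1, 0, 0, 0, 1, 1, 0, 0, 1, 0]
  | 1 => ![1, 1, 0, 0, 0, 0, 1, 0, 0, 1]
  | 2 => ![0, 1, 1, 0, 0, 1, 0, 1, 0, 0]
  | 3 => ![0, 0, 1, 1, 0, 0, 1, 0, 1, 0]
  | 4 => ![0, 0, 0, 1, 1, 0, 0, 1, 0, 1]

/-- `F` is the `ℚ`-linear span of the fan vectors. -/
def fanSpan : Submodule ℚ (Fin 10 → ℚ) := Submodule.span ℚ (Set.range fanVec)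

/-- The permutation `α = (1 5)(2 8)(4 7)` of `{1,…,10}`, on `Fin 10`
(symbol `i` corresponds to index `i-1`). -/
def permAlpha : Equiv.Perm (Fin 10) := Equiv.swap 0 4 * Equiv.swap 1 7 * Equiv.swap 3 6

/-- The permutation `σ = (2 5 7 6 10 9)(3 8 4)` of `{1,…,10}`, on `Fin 10`. -/
def permSigma : Equiv.Perm (Fin 10) :=
  List.formPerm [(1 : Fin 10), 4, 6, 5, 9, 8] * List.formPerm [(2 : Fin 10), 7, 3]

/-- The permutation `φ = (1 2 3 4 5)(6 7 8 9 10)` of `{1,…,10}`, on `Fin 10`. -/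
def permPhi : Equiv.Perm (Fin 10) :=
  List.formPerm [(0 : Fin 10), 1, 2, 3, 4] * List.formPerm [(5 : Fin 10), 6, 7, 8, 9]

lemma fanVec_mem (j : Fin 5) : fanVec j ∈ fanSpan :=
  Submodule.subset_span ⟨j, rfl⟩

lemma linIndep_fanVec : LinearIndependent ℚ fanVec := by
  rw [Fintype.linearIndependent_iff]
  intro c hc
  have h : ∀ i : Fin 10, (∑ j : Fin 5, c j • fanVec j) i = 0 := fun i => by rw [hc]; rfl
  have h0 := h 0; have h1 := h 1; have h2 := h 2
  have h3 := h 3; have h4 := h 4; have h5 := h 5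
  simp only [Fin.sum_univ_five, fanVec, Pi.add_apply, Pi.smul_apply, smul_eq_mul, Matrix.cons_val]
    at h0 h1 h2 h3 h4 h5
  norm_num at h0 h1 h2 h3 h4 h5
  have e0 : c 0 = 0 := by linarith
  have e1 : c 1 = 0 := by linarith
  have e2 : c 2 = 0 := by linarith
  have e3 : c 3 = 0 := by linarith
  have e4 : c 4 = 0 := by linarith
  intro j; fin_cases j
  exacts [e0, e1, e2, e3, e4]

lemma perm_preserves (g : Equiv.Perm (Fin 10))
    (hg : ∀ j : Fin 5, (fun i => fanVec j (g⁻¹ i)) ∈ fanSpan) :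
    ∀ x ∈ fanSpan, (fun i => x (g⁻¹ i)) ∈ fanSpan := by
  intro x hx
  refine Submodule.span_induction ?_ ?_ ?_ ?_ hx
  · rintro _ ⟨j, rfl⟩; exact hg j
  · exact fanSpan.zero_mem
  · intro y z _ _ hy hz
    have : (fun i => (y + z) (g⁻¹ i)) = (fun i => y (g⁻¹ i)) + fun i => z (g⁻¹ i) := rfl
    rw [this]; exact fanSpan.add_mem hy hz
  · intro a y _ hy
    have : (fun i => (a • y) (g⁻¹ i)) = a • fun i => y (g⁻¹ i) := rfl
    rw [this]; exact fanSpan.smul_mem a hy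

lemma permAlpha_inv_eval : ∀ i, permAlpha⁻¹ i = ![4, 7, 2, 6, 0, 5, 3, 1, 8, 9] i := by
  intro i; fin_cases i <;>
    simp [permAlpha, Equiv.swap_apply_def, mul_inv_rev, Equiv.Perm.mul_apply] <;> rfl

lemma permSigma_inv_eval : ∀ i, permSigma⁻¹ i = ![0, 8, 3, 7, 1, 6, 4, 2, 9, 5] i := by
  intro i; fin_cases i <;>
    simp [permSigma, List.formPerm_cons_cons, List.formPerm_singleton,
      Equiv.swap_apply_def, mul_inv_rev, Equiv.Perm.mul_apply] <;> rfl

lemma permPhi_inv_eval : ∀ i, permPhi⁻¹ i = ![4, 0, 1, 2, 3, 9, 5, 6, 7, 8] i := by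
  intro i; fin_cases i <;>
    simp [permPhi, List.formPerm_cons_cons, List.formPerm_singleton,
      Equiv.swap_apply_def, mul_inv_rev, Equiv.Perm.mul_apply] <;> rfl

lemma fanAlpha0 : (fun i => fanVec 0 (permAlpha⁻¹ i)) = fanVec 0 := by
  funext i; rw [permAlpha_inv_eval i]
  fin_cases i <;>
    norm_num [fanVec, Matrix.cons_val_succ', Matrix.cons_val_zero'] <;> rfl

lemma fanAlpha1 : (fun i => fanVec 1 (permAlpha⁻¹ i)) = fanVec 4 := by
  funext i; rw [permAlpha_inv_eval i]
  fin_cases i <;>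
    norm_num [fanVec, Matrix.cons_val_succ', Matrix.cons_val_zero'] <;> rfl

lemma fanAlpha2 : (fun i => fanVec 2 (permAlpha⁻¹ i)) = fanVec 2 := by
  funext i; rw [permAlpha_inv_eval i]
  fin_cases i <;>
    norm_num [fanVec, Matrix.cons_val_succ', Matrix.cons_val_zero'] <;> rfl

lemma fanAlpha3 : (fun i => fanVec 3 (permAlpha⁻¹ i)) = fanVec 3 := by
  funext i; rw [permAlpha_inv_eval i]
  fin_cases i <;>
    norm_num [fanVec, Matrix.cons_val_succ', Matrix.cons_val_zero'] <;> rfl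

lemma fanAlpha4 : (fun i => fanVec 4 (permAlpha⁻¹ i)) = fanVec 1 := by
  funext i; rw [permAlpha_inv_eval i]
  fin_cases i <;>
    norm_num [fanVec, Matrix.cons_val_succ', Matrix.cons_val_zero'] <;> rfl

lemma alpha_fan (j : Fin 5) :
    (fun i => fanVec j (permAlpha⁻¹ i)) = fanVec (![0, 4, 2, 3, 1] j) := by
  fin_cases j
  · exact fanAlpha0
  · exact fanAlpha1
  · exact fanAlpha2
  · exact fanAlpha3
  · exact fanAlpha4

lemma fanSigma0 : (fun i => fanVec 0 (permSigma⁻¹ i)) = fanVec 1 := by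
  funext i; rw [permSigma_inv_eval i]
  fin_cases i <;>
    norm_num [fanVec, Matrix.cons_val_succ', Matrix.cons_val_zero'] <;> rfl

lemma fanSigma1 : (fun i => fanVec 1 (permSigma⁻¹ i)) = fanVec 0 := by
  funext i; rw [permSigma_inv_eval i]
  fin_cases i <;>
    norm_num [fanVec, Matrix.cons_val_succ', Matrix.cons_val_zero'] <;> rfl

lemma fanSigma2 : (fun i => fanVec 2 (permSigma⁻¹ i)) = fanVec 4 := by
  funext i; rw [permSigma_inv_eval i]
  fin_cases i <;>
    norm_num [fanVec, Matrix.cons_val_succ', Matrix.cons_val_zero'] <;> rfl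

lemma fanSigma3 : (fun i => fanVec 3 (permSigma⁻¹ i)) = fanVec 2 := by
  funext i; rw [permSigma_inv_eval i]
  fin_cases i <;>
    norm_num [fanVec, Matrix.cons_val_succ', Matrix.cons_val_zero'] <;> rfl

lemma fanSigma4 : (fun i => fanVec 4 (permSigma⁻¹ i)) = fanVec 3 := by
  funext i; rw [permSigma_inv_eval i]
  fin_cases i <;>
    norm_num [fanVec, Matrix.cons_val_succ', Matrix.cons_val_zero'] <;> rfl

lemma sigma_fan (j : Fin 5) :
    (fun i => fanVec j (permSigma⁻¹ i)) = fanVec (![1, 0, 4, 2, 3] j) := by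
  fin_cases j
  · exact fanSigma0
  · exact fanSigma1
  · exact fanSigma2
  · exact fanSigma3
  · exact fanSigma4

lemma fanPhi0 : (fun i => fanVec 0 (permPhi⁻¹ i)) = fanVec 1 := by
  funext i; rw [permPhi_inv_eval i]
  fin_cases i <;>
    norm_num [fanVec, Matrix.cons_val_succ', Matrix.cons_val_zero'] <;> rfl

lemma fanPhi1 : (fun i => fanVec 1 (permPhi⁻¹ i)) = fanVec 2 := by
  funext i; rw [permPhi_inv_eval i]
  fin_cases i <;>
    norm_num [fanVec, Matrix.cons_val_succ', Matrix.cons_val_zero'] <;> rfl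

lemma fanPhi2 : (fun i => fanVec 2 (permPhi⁻¹ i)) = fanVec 3 := by
  funext i; rw [permPhi_inv_eval i]
  fin_cases i <;>
    norm_num [fanVec, Matrix.cons_val_succ', Matrix.cons_val_zero'] <;> rfl

lemma fanPhi3 : (fun i => fanVec 3 (permPhi⁻¹ i)) = fanVec 4 := by
  funext i; rw [permPhi_inv_eval i]
  fin_cases i <;>
    norm_num [fanVec, Matrix.cons_val_succ', Matrix.cons_val_zero'] <;> rfl

lemma fanPhi4 : (fun i => fanVec 4 (permPhi⁻¹ i)) = fanVec 0 := by
  funext i; rw [permPhi_inv_eval i]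
  fin_cases i <;>
    norm_num [fanVec, Matrix.cons_val_succ', Matrix.cons_val_zero'] <;> rfl

lemma phi_fan (j : Fin 5) :
    (fun i => fanVec j (permPhi⁻¹ i)) = fanVec (![1, 2, 3, 4, 0] j) := by
  fin_cases j
  · exact fanPhi0
  · exact fanPhi1
  · exact fanPhi2
  · exact fanPhi3
  · exact fanPhi4

/-- (i) `F` has dimension 5; (ii) `v_1 + ⋯ + v_5 = (2,…,2)`, so `F` contains the all-ones
vector; (iii) `F` is invariant under the coordinate-permutation action
`(g • x) i = x (g⁻¹ i)` of each of `α`, `σ`, `φ`. -/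
theorem stmt11 :
    Module.finrank ℚ fanSpan = 5 ∧
    (∑ i : Fin 5, fanVec i) = (fun _ => 2) ∧
    (fun _ => (1 : ℚ)) ∈ fanSpan ∧
    (∀ g ∈ ({permAlpha, permSigma, permPhi} : Set (Equiv.Perm (Fin 10))),
      ∀ x ∈ fanSpan, (fun i => x (g⁻¹ i)) ∈ fanSpan) := by
  have hsum : (∑ i : Fin 5, fanVec i) = (fun _ => 2) := by
    funext i
    have : (∑ j : Fin 5, fanVec j) i = ∑ j : Fin 5, fanVec j i := by
      simp [Finset.sum_apply]
    rw [this]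
    fin_cases i <;> norm_num [Fin.sum_univ_five, fanVec, Matrix.cons_val_succ', Matrix.cons_val_zero']
  refine ⟨?_, hsum, ?_, ?_⟩
  · have := finrank_span_eq_card linIndep_fanVec
    rw [fanSpan, this]; simp
  · have h2 : (fun _ => (2 : ℚ)) ∈ fanSpan := by
      rw [← hsum]
      exact Submodule.sum_mem _ fun j _ => fanVec_mem j
    have hm := fanSpan.smul_mem (1/2 : ℚ) h2
    have he : ((1/2 : ℚ) • (fun _ => (2 : ℚ) : Fin 10 → ℚ)) = (fun _ => (1 : ℚ)) := by
      funext i; norm_num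
    rwa [he] at hm
  · intro g hg
    rcases hg with rfl | rfl | rfl
    · exact perm_preserves _ fun j => alpha_fan j ▸ fanVec_mem _
    · exact perm_preserves _ fun j => sigma_fan j ▸ fanVec_mem _
    · exact perm_preserves _ fun j => phi_fan j ▸ fanVec_mem _
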